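/- For n odd, the number of distinct values of the sum of squares of scores over all n-tournaments is (1/4)·C(n+1,3) + 1. -/

import Mathlib

def IsTournament {n : ℕ} (r : Fin n → Fin n → Prop) : Prop :=
  (∀ i, ¬ r i i) ∧ ∀ i j : Fin n, i ≠ j → (r i j ↔ ¬ r j i)

noncomputable def score {n : ℕ} (r : Fin n → Fin n → Prop) (v : Fin n) : ℕ :=
  Nat.card {j : Fin n // r v j}

open Finset

lemma score_eq_card {n : ℕ} (r : Fin n → Fin n → Prop) (v : Fin n)
    [DecidablePred (r v)] :
    score r v = (univ.filter (fun j => r v j)).card := by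
  classical
  rw [score, Nat.card_eq_fintype_card]
  convert Fintype.card_subtype (fun j => r v j)

lemma score_lt {n : ℕ} {r : Fin n → Fin n → Prop} (hr : IsTournament r) (v : Fin n) :
    score r v < n := by
  classical
  rw [score_eq_card]
  calc (univ.filter (fun j => r v j)).card ≤ (univ.erase v).card := by
        apply card_le_card
        intro j hj
        simp only [mem_filter, mem_univ, true_and] at hj
        refine mem_erase.mpr ⟨fun h => hr.1 v (h ▸ hj), mem_univ j⟩
    _ < n := by
        rw [card_erase_of_mem (mem_univ v), card_univ, Fintype.card_fin]
        have := v.pos; omega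

lemma sum_scores {n m : ℕ} (hn : n = 2 * m + 1) {r : Fin n → Fin n → Prop}
    (hr : IsTournament r) : ∑ i : Fin n, score r i = n * m := by
  classical
  have h1 : ∀ v : Fin n, score r v = ∑ j : Fin n, if r v j then 1 else 0 := by
    intro v
    rw [score_eq_card, card_filter]
  have hS2 : ∑ i : Fin n, score r i = ∑ i : Fin n, ∑ j : Fin n, if r j i then 1 else 0 := by
    simp only [h1]; exact Finset.sum_comm
  have key : 2 * ∑ i : Fin n, score r i = n * (n - 1) := by
    calc 2 * ∑ i : Fin n, score r i
        = (∑ i : Fin n, ∑ j : Fin n, if r i j then 1 else 0)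
          + ∑ i : Fin n, ∑ j : Fin n, if r j i then 1 else 0 := by
          rw [two_mul, ← hS2]; congr 1; simp only [h1]
      _ = ∑ i : Fin n, ∑ j : Fin n, ((if r i j then 1 else 0) + if r j i then 1 else 0) := by
          rw [← Finset.sum_add_distrib]
          congr 1; ext i; rw [← Finset.sum_add_distrib]
      _ = ∑ i : Fin n, ∑ j : Fin n, (if i = j then 0 else 1) := by
          congr 1; ext i; congr 1; ext j
          by_cases hij : i = j
          · subst hij; simp [hr.1 i]
          · have h2 := hr.2 i j hij
            by_cases hij2 : r i j
            · simp [hij, hij2, h2.mp hij2]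
            · simp [hij, hij2, (hr.2 j i (Ne.symm hij)).mpr hij2]
      _ = ∑ _i : Fin n, (n - 1) := by
          refine Finset.sum_congr rfl (fun i _ => ?_)
          rw [← Finset.add_sum_erase _ _ (mem_univ i), if_pos rfl, zero_add]
          have : ∀ j ∈ univ.erase i, (if i = j then (0:ℕ) else 1) = 1 := by
            intro j hj
            rw [if_neg (fun h => (mem_erase.mp hj).1 h.symm)]
          rw [Finset.sum_congr rfl this]
          simp [card_erase_of_mem, card_univ]
      _ = n * (n - 1) := by simp [card_univ, mul_comm]
  have h2 : n * (n - 1) = 2 * (n * m) := by subst hn; simp only [Nat.add_sub_cancel]; ring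
  omega

lemma sum_sq_lower {n m : ℕ} (hn : n = 2 * m + 1) {r : Fin n → Fin n → Prop}
    (hr : IsTournament r) : n * m ^ 2 ≤ ∑ i : Fin n, (score r i) ^ 2 := by
  have hs := sum_scores hn hr
  have hcs : ((∑ i : Fin n, score r i : ℕ) : ℤ) ^ 2
      ≤ (n : ℤ) * ∑ i : Fin n, ((score r i : ℤ)) ^ 2 := by
    have := sq_sum_le_card_mul_sum_sq (s := (univ : Finset (Fin n)))
      (f := fun i => ((score r i : ℤ)))
    simpa [card_univ] using this
  rw [hs] at hcs
  have h2 : ((n : ℤ) * (n * m ^ 2)) ≤ (n : ℤ) * ∑ i : Fin n, ((score r i : ℤ)) ^ 2 := by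
    calc ((n : ℤ) * (n * m ^ 2)) = ((n * m : ℕ) : ℤ) ^ 2 := by push_cast; ring
    _ ≤ _ := hcs
  have hn0 : (0 : ℤ) < n := by exact_mod_cast (by omega : 0 < n)
  have h3 := le_of_mul_le_mul_left h2 hn0
  have h4 : ((∑ i : Fin n, (score r i) ^ 2 : ℕ) : ℤ) = ∑ i : Fin n, ((score r i : ℤ)) ^ 2 := by
    push_cast; rfl
  rw [← h4] at h3
  exact_mod_cast h3

lemma sum_sq_parity {n m : ℕ} (hn : n = 2 * m + 1) {r : Fin n → Fin n → Prop}
    (hr : IsTournament r) : (∑ i : Fin n, (score r i) ^ 2) % 2 = (n * m ^ 2) % 2 := by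
  have hs := sum_scores hn hr
  have h1 : (∑ i : Fin n, (score r i) ^ 2) % 2 = (∑ i : Fin n, score r i) % 2 := by
    rw [Finset.sum_nat_mod, Finset.sum_nat_mod (f := fun i => score r i)]
    congr 1
    refine Finset.sum_congr rfl (fun i _ => ?_)
    rcases Nat.even_or_odd (score r i) with h | h <;> obtain ⟨k, hk⟩ := h <;> rw [hk] <;> ring_nf <;> omega
  rw [h1, hs]
  have : (m ^ 2) % 2 = m % 2 := by
    rcases Nat.even_or_odd m with h | h <;> obtain ⟨k, hk⟩ := h <;> rw [hk] <;> ring_nf <;> omega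
  rw [Nat.mul_mod, Nat.mul_mod n (m ^ 2), this]

lemma six_mul_sumsq (k : ℕ) : 6 * ∑ i ∈ range (k + 1), i ^ 2 = k * (k + 1) * (2 * k + 1) := by
  induction k with
  | zero => simp
  | succ k ih => rw [Finset.sum_range_succ, Nat.mul_add, ih]; ring

lemma two_mul_choose_two (k : ℕ) : 2 * k.choose 2 = k * (k - 1) := by
  induction k with
  | zero => simp
  | succ k ih =>
    rw [Nat.choose_succ_succ, Nat.mul_add, ih, Nat.choose_one_right, Nat.succ_sub_one]
    cases k <;> [simp; (rename_i k; simp only [Nat.succ_sub_one]; ring)]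

lemma six_mul_choose_three' (k : ℕ) : 6 * (k + 2).choose 3 = (k + 2) * (k + 1) * k := by
  induction k with
  | zero => simp
  | succ k ih =>
    have h2 : 2 * (k + 2).choose 2 = (k + 2) * (k + 1) := by
      have := two_mul_choose_two (k + 2); simpa using this
    have hs : (k + 2 + 1).choose 3 = (k + 2).choose 3 + (k + 2).choose 2 := by
      rw [Nat.choose_succ_succ]; ring
    calc 6 * (k + 1 + 2).choose 3 = 6 * (k + 2).choose 3 + 3 * (2 * (k + 2).choose 2) := by
          rw [show k + 1 + 2 = k + 2 + 1 by ring, hs]; ring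
    _ = (k + 2) * (k + 1) * k + 3 * ((k + 2) * (k + 1)) := by rw [ih, h2]
    _ = (k + 1 + 2) * (k + 1 + 1) * (k + 1) := by ring

lemma six_mul_choose_three (k : ℕ) : 6 * k.choose 3 = k * (k - 1) * (k - 2) := by
  rcases k with _ | _ | k
  · simp
  · rfl
  · have := six_mul_choose_three' k
    simpa [Nat.succ_sub_one, show k + 1 + 1 = k + 2 by ring] using this

lemma max_val_eq {n m : ℕ} (hn : n = 2 * m + 1) :
    ∑ i ∈ range n, i ^ 2 = n * m ^ 2 + 2 * ∑ i ∈ range (m + 1), i ^ 2 := by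
  have h1 := six_mul_sumsq (2 * m)
  have h2 := six_mul_sumsq m
  have : 6 * (n * m ^ 2 + 2 * ∑ i ∈ range (m + 1), i ^ 2)
      = 6 * (n * m ^ 2) + 2 * (6 * ∑ i ∈ range (m + 1), i ^ 2) := by ring
  have key : 6 * ∑ i ∈ range n, i ^ 2 = 6 * (n * m ^ 2 + 2 * ∑ i ∈ range (m + 1), i ^ 2) := by
    rw [this, h2, hn]
    have : 2 * m + 1 = 2 * m + 1 := rfl
    rw [show (2*m+1 : ℕ) = 2*m+1 from rfl]
    calc 6 * ∑ i ∈ range (2*m+1), i ^ 2 = 2 * m * (2 * m + 1) * (2 * (2*m) + 1) := six_mul_sumsq (2*m)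
    _ = 6 * ((2*m+1) * m ^ 2) + 2 * (m * (m + 1) * (2 * m + 1)) := by ring
  omega

lemma choose_div_eq {n m : ℕ} (hn : n = 2 * m + 1) :
    (n + 1).choose 3 / 4 = ∑ i ∈ range (m + 1), i ^ 2 := by
  have h3 := six_mul_choose_three (n + 1)
  have h2 := six_mul_sumsq m
  have hv : (n + 1) * (n + 1 - 1) * (n + 1 - 2) = 24 * ∑ i ∈ range (m + 1), i ^ 2 := by
    subst hn
    simp only [show 2*m+1+1-1 = 2*m+1 by omega, show 2*m+1+1-2 = 2*m by omega]
    calc (2*m+1+1) * (2*m+1) * (2*m) = 4 * (m * (m + 1) * (2 * m + 1)) := by ring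
    _ = 4 * (6 * ∑ i ∈ range (m + 1), i ^ 2) := by rw [h2]
    _ = 24 * ∑ i ∈ range (m + 1), i ^ 2 := by ring
  have : (n + 1).choose 3 = 4 * ∑ i ∈ range (m + 1), i ^ 2 := by omega
  rw [this, Nat.mul_div_cancel_left _ (by norm_num)]

lemma sum_sq_upper {n m : ℕ} (hn : n = 2 * m + 1) {r : Fin n → Fin n → Prop}
    (hr : IsTournament r) :
    ∑ i : Fin n, (score r i) ^ 2 ≤ n * m ^ 2 + 2 * ∑ i ∈ range (m + 1), i ^ 2 := by
  classical
  set N : Fin n → Finset (Fin n) := fun v => univ.filter (fun j => r v j) with hN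
  have hscore : ∀ v, score r v = (N v).card := fun v => score_eq_card r v
  have hmemN : ∀ v j, j ∈ N v ↔ r v j := by intro v j; simp [hN]
  have hsplit : ∀ v, (score r v) ^ 2 = score r v + ((N v).offDiag).card := by
    intro v
    rw [Finset.offDiag_card, ← hscore, pow_two]
    rcases Nat.eq_zero_or_pos (score r v) with h | h
    · rw [h]; simp
    · have : score r v ≤ score r v * score r v := Nat.le_mul_of_pos_left _ h
      omega
  have hsum : ∑ i : Fin n, (score r i) ^ 2
      = n * m + ∑ v : Fin n, ((N v).offDiag).card := by
    rw [← sum_scores hn hr, ← Finset.sum_add_distrib]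
    exact Finset.sum_congr rfl (fun v _ => hsplit v)
  have hcount : ∑ v : Fin n, ((N v).offDiag).card ≤ 2 * n.choose 3 := by
    rw [← Finset.card_sigma]
    have hle := Finset.card_le_card_of_injOn
      (f := fun x : (_ : Fin n) × (Fin n × Fin n) =>
        (({x.1, x.2.1, x.2.2} : Finset (Fin n)), decide (x.2.1 < x.2.2)))
      (s := univ.sigma (fun v => (N v).offDiag))
      (t := (univ.powersetCard 3) ×ˢ (univ : Finset Bool))
      ?_ ?_
    · calc _ ≤ _ := hle
        _ = 2 * n.choose 3 := by
          rw [Finset.card_product, Finset.card_powersetCard, card_univ, card_univ,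
            Fintype.card_fin, Fintype.card_bool]
          ring
    · rintro ⟨v, a, b⟩ hx
      rw [Finset.mem_coe, Finset.mem_sigma] at hx
      obtain ⟨-, hx⟩ := hx
      rw [Finset.mem_offDiag] at hx
      obtain ⟨ha, hb, hab⟩ := hx
      rw [hmemN] at ha hb
      have hva : v ≠ a := fun h => hr.1 v (h ▸ ha)
      have hvb : v ≠ b := fun h => hr.1 v (h ▸ hb)
      rw [Finset.mem_coe, Finset.mem_product]
      refine ⟨Finset.mem_powersetCard_univ.mpr ?_, Finset.mem_univ _⟩
      exact Finset.card_eq_three.mpr ⟨v, a, b, hva, hvb, hab, rfl⟩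
    · rintro ⟨v, a, b⟩ hx ⟨v', a', b'⟩ hy hxy
      simp only [Finset.coe_sigma, Set.mem_sigma_iff, Finset.mem_coe, Finset.mem_univ,
        Finset.mem_offDiag] at hx hy
      obtain ⟨-, ha, hb, hab⟩ := hx
      obtain ⟨-, ha', hb', hab'⟩ := hy
      rw [hmemN] at ha hb ha' hb'
      have hva : v ≠ a := fun h => hr.1 v (h ▸ ha)
      have hvb : v ≠ b := fun h => hr.1 v (h ▸ hb)
      have hva' : v' ≠ a' := fun h => hr.1 v' (h ▸ ha')
      have hvb' : v' ≠ b' := fun h => hr.1 v' (h ▸ hb')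
      have hset : ({v, a, b} : Finset (Fin n)) = {v', a', b'} := congrArg Prod.fst hxy
      have hbool : decide (a < b) = decide (a' < b') := congrArg Prod.snd hxy
      have hvv' : v = v' := by
        by_contra hne
        have h1 : v' ∈ ({v, a, b} : Finset (Fin n)) := by rw [hset]; simp
        have h2 : v ∈ ({v', a', b'} : Finset (Fin n)) := by rw [← hset]; simp
        simp only [Finset.mem_insert, Finset.mem_singleton] at h1 h2
        have hrvv' : r v v' := by
          rcases h1 with h | h | h
          · exact absurd h.symm hne
          · exact h ▸ ha
          · exact h ▸ hb
        have hrv'v : r v' v := by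
          rcases h2 with h | h | h
          · exact absurd h hne
          · exact h ▸ ha'
          · exact h ▸ hb'
        exact ((hr.2 v' v (fun h => hne h.symm)).mp hrv'v) hrvv'
      subst hvv'
      have ha'mem : a' = a ∨ a' = b := by
        have h1 : a' ∈ ({v, a, b} : Finset (Fin n)) := by rw [hset]; simp
        simp only [Finset.mem_insert, Finset.mem_singleton] at h1
        rcases h1 with h | h | h
        · exact absurd h hva'.symm
        · exact Or.inl h
        · exact Or.inr h
      have hb'mem : b' = a ∨ b' = b := by
        have h1 : b' ∈ ({v, a, b} : Finset (Fin n)) := by rw [hset]; simp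
        simp only [Finset.mem_insert, Finset.mem_singleton] at h1
        rcases h1 with h | h | h
        · exact absurd h hvb'.symm
        · exact Or.inl h
        · exact Or.inr h
      rcases ha'mem with h | h
      · subst h
        have hbb : b' = b := by
          rcases hb'mem with h | h
          · exact absurd h.symm hab'
          · exact h
        subst hbb; rfl
      · exfalso
        have hba : b' = a := by
          rcases hb'mem with h2 | h2
          · exact h2
          · exact absurd (h.trans h2.symm) hab'
        have hiff : a < b ↔ a' < b' := decide_eq_decide.mp hbool
        rw [h, hba] at hiff
        rcases lt_or_gt_of_ne hab with hlt | hlt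
        · exact absurd (hiff.mp hlt) (lt_asymm hlt)
        · exact absurd (hiff.mpr hlt) (lt_asymm hlt)
  have h3 := six_mul_choose_three n
  have h6 := six_mul_sumsq m
  have e1 : 3 * (n * m) + n * (n - 1) * (n - 2)
      = 3 * (n * m ^ 2) + m * (m + 1) * (2 * m + 1) := by
    rcases m with _ | m'
    · subst hn; norm_num
    · subst hn
      rw [show 2 * (m' + 1) + 1 - 1 = 2 * (m' + 1) by omega,
        show 2 * (m' + 1) + 1 - 2 = 2 * m' + 1 by omega]
      ring
  omega

lemma flip_up {n : ℕ} {r : Fin n → Fin n → Prop} (hr : IsTournament r) {v w : Fin n}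
    (hvw : v ≠ w) (hrvw : r v w) (hs : score r v = score r w) :
    ∃ r' : Fin n → Fin n → Prop, IsTournament r' ∧
      ∑ i : Fin n, (score r' i) ^ 2 = (∑ i : Fin n, (score r i) ^ 2) + 2 := by
  classical
  set r' : Fin n → Fin n → Prop := fun a b =>
    if a = v ∧ b = w then False else if a = w ∧ b = v then True else r a b with hr'
  have hnrwv : ¬ r w v := (hr.2 v w hvw).mp hrvw
  have hT : IsTournament r' := by
    constructor
    · intro a
      simp only [hr']
      have h1 : ¬(a = v ∧ a = w) := fun ⟨x, y⟩ => hvw (x.symm.trans y)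
      have h2 : ¬(a = w ∧ a = v) := fun ⟨x, y⟩ => hvw (y.symm.trans x)
      simp only [if_neg h1, if_neg h2]
      exact hr.1 a
    · intro a b hab
      simp only [hr']
      by_cases h1 : a = v ∧ b = w
      · obtain ⟨rfl, rfl⟩ := h1
        simp [hvw, Ne.symm hvw, hr.1]
      · by_cases h2 : a = w ∧ b = v
        · obtain ⟨rfl, rfl⟩ := h2
          simp [hvw, Ne.symm hvw, hr.1]
        · have h1' : ¬ (b = v ∧ a = w) := fun ⟨hb, ha⟩ => h2 ⟨ha, hb⟩
          have h2' : ¬ (b = w ∧ a = v) := fun ⟨hb, ha⟩ => h1 ⟨ha, hb⟩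
          simp only [if_neg h1, if_neg h2, if_neg h1', if_neg h2']
          exact hr.2 a b hab
  refine ⟨r', hT, ?_⟩
  have hscore_other : ∀ x : Fin n, x ≠ v → x ≠ w → score r' x = score r x := by
    intro x hxv hxw
    rw [score_eq_card, score_eq_card]
    congr 1
    apply Finset.filter_congr
    intro j _
    simp [hr', hxv, hxw]
  have hNv : (univ.filter (fun j => r' v j)) = (univ.filter (fun j => r v j)).erase w := by
    ext j
    simp only [Finset.mem_erase, Finset.mem_filter, Finset.mem_univ, true_and, hr']
    rcases eq_or_ne j w with rfl | hjw
    · simp [hvw]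
    · simp [hjw, hvw, Ne.symm hvw]
  have hNw : (univ.filter (fun j => r' w j)) = insert v (univ.filter (fun j => r w j)) := by
    ext j
    simp only [Finset.mem_insert, Finset.mem_filter, Finset.mem_univ, true_and, hr']
    rcases eq_or_ne j v with rfl | hjv
    · simp [Ne.symm hvw, hvw]
    · simp [hjv, Ne.symm hvw]
  have hsv : score r' v = score r v - 1 := by
    rw [score_eq_card, score_eq_card, hNv,
      Finset.card_erase_of_mem (by simp [hrvw])]
  have hsw : score r' w = score r w + 1 := by
    rw [score_eq_card, score_eq_card, hNw,
      Finset.card_insert_of_notMem (by simp [hnrwv])]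
  have hpos : 1 ≤ score r v := by
    rw [score_eq_card]
    exact Finset.card_pos.mpr ⟨w, by simp [hrvw]⟩
  have hsplit : ∀ g : Fin n → ℕ, ∑ i : Fin n, g i
      = g v + g w + ∑ i ∈ (univ.erase v).erase w, g i := by
    intro g
    rw [← Finset.add_sum_erase _ _ (mem_univ v),
      ← Finset.add_sum_erase _ g (Finset.mem_erase.mpr ⟨Ne.symm hvw, mem_univ w⟩)]
    ring
  rw [hsplit (fun i => (score r' i) ^ 2), hsplit (fun i => (score r i) ^ 2)]
  have hrest : ∑ i ∈ (univ.erase v).erase w, (score r' i) ^ 2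
      = ∑ i ∈ (univ.erase v).erase w, (score r i) ^ 2 := by
    refine Finset.sum_congr rfl (fun x hx => ?_)
    rw [Finset.mem_erase, Finset.mem_erase] at hx
    rw [hscore_other x hx.2.1 hx.1]
  rw [hrest, hsv, hsw, ← hs]
  obtain ⟨s', hs'⟩ : ∃ s', score r v = s' + 1 := ⟨score r v - 1, by omega⟩
  rw [hs']
  simp only [Nat.add_sub_cancel]
  ring

lemma rot_exists {n m : ℕ} (hn : n = 2 * m + 1) :
    ∃ r : Fin n → Fin n → Prop, IsTournament r ∧
      ∑ i : Fin n, (score r i) ^ 2 = n * m ^ 2 := by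
  classical
  have hn0 : 0 < n := by omega
  set d : Fin n → Fin n → ℕ := fun i j => (j.val + n - i.val) % n with hd
  set r : Fin n → Fin n → Prop := fun i j => 1 ≤ d i j ∧ d i j ≤ m with hrdef
  have hdlt : ∀ i j, d i j < n := fun i j => Nat.mod_lt _ hn0
  have hdzero : ∀ i j : Fin n, d i j = 0 ↔ i = j := by
    intro i j
    have hj : j.val < n := j.isLt
    have hi : i.val < n := i.isLt
    constructor
    · intro h
      have hdvd : n ∣ (j.val + n - i.val) := Nat.dvd_of_mod_eq_zero h
      obtain ⟨k, hk⟩ := hdvd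
      rcases k with _ | _ | k
      · omega
      · refine Fin.ext ?_
        omega
      · exfalso
        have h2 : n * (k + 1 + 1) = n * k + n + n := by ring
        omega
    · rintro rfl
      simp only [hd]
      rw [show i.val + n - i.val = n by omega, Nat.mod_self]
  have hdsum : ∀ i j : Fin n, i ≠ j → d i j + d j i = n := by
    intro i j hij
    have hij' : i.val ≠ j.val := fun h => hij (Fin.ext h)
    have hj : j.val < n := j.isLt
    have hi : i.val < n := i.isLt
    rcases Nat.lt_or_ge i.val j.val with hlt | hge
    · have e1 : d i j = j.val - i.val := by
        simp only [hd]
        rw [Nat.mod_eq_sub_mod (show n ≤ j.val + n - i.val by omega),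
          Nat.mod_eq_of_lt (show j.val + n - i.val - n < n by omega)]
        omega
      have e2 : d j i = i.val + n - j.val := by
        simp only [hd]
        rw [Nat.mod_eq_of_lt (show i.val + n - j.val < n by omega)]
      omega
    · have hgt : j.val < i.val := by omega
      have e1 : d i j = j.val + n - i.val := by
        simp only [hd]
        rw [Nat.mod_eq_of_lt (show j.val + n - i.val < n by omega)]
      have e2 : d j i = i.val - j.val := by
        simp only [hd]
        rw [Nat.mod_eq_sub_mod (show n ≤ i.val + n - j.val by omega),
          Nat.mod_eq_of_lt (show i.val + n - j.val - n < n by omega)]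
        omega
      omega
  have htour : IsTournament r := by
    constructor
    · intro i
      have h0 : d i i = 0 := (hdzero i i).mpr rfl
      simp only [hrdef]
      omega
    · intro i j hij
      have hsum := hdsum i j hij
      have h1 : d i j ≠ 0 := fun h => hij ((hdzero i j).mp h)
      have h2 : d j i ≠ 0 := fun h => hij ((hdzero j i).mp h).symm
      simp only [hrdef]
      omega
  have hcomp : ∀ (i : Fin n) (k : ℕ), k ≤ m →
      d i ⟨(i.val + k) % n, Nat.mod_lt _ hn0⟩ = k := by
    intro i k hk
    have hi : i.val < n := i.isLt
    simp only [hd]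
    rcases Nat.lt_or_ge (i.val + k) n with h | h
    · rw [Nat.mod_eq_of_lt h, show i.val + k + n - i.val = k + n by omega,
        Nat.add_mod_right, Nat.mod_eq_of_lt (show k < n by omega)]
    · rw [Nat.mod_eq_sub_mod h, Nat.mod_eq_of_lt (show i.val + k - n < n by omega),
        show i.val + k - n + n - i.val = k by omega,
        Nat.mod_eq_of_lt (show k < n by omega)]
  have hscore : ∀ i : Fin n, score r i = m := by
    intro i
    have hi : i.val < n := i.isLt
    rw [score_eq_card]
    have hcard : (univ.filter (fun j => r i j)).card = (Finset.Icc 1 m).card := by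
      apply Finset.card_bij' (i := fun j _ => d i j)
        (j := fun k _ => (⟨(i.val + k) % n, Nat.mod_lt _ hn0⟩ : Fin n))
      · intro j hj
        rw [Finset.mem_filter] at hj
        rw [Finset.mem_Icc]
        exact hj.2
      · intro k hk
        rw [Finset.mem_Icc] at hk
        rw [Finset.mem_filter]
        refine ⟨Finset.mem_univ _, ?_⟩
        simp only [hrdef]
        rw [hcomp i k hk.2]
        exact hk
      · intro j hj
        refine Fin.ext ?_
        show (i.val + (j.val + n - i.val) % n) % n = j.val
        rw [Nat.add_mod_mod, show i.val + (j.val + n - i.val) = j.val + n by omega,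
          Nat.add_mod_right, Nat.mod_eq_of_lt j.isLt]
      · intro k hk
        rw [Finset.mem_Icc] at hk
        exact hcomp i k hk.2
    rw [hcard, Nat.card_Icc]
    omega
  refine ⟨r, htour, ?_⟩
  have : ∀ i : Fin n, (score r i) ^ 2 = m ^ 2 := fun i => by rw [hscore i]
  rw [Finset.sum_congr rfl (fun i _ => this i), Finset.sum_const, card_univ,
    Fintype.card_fin, smul_eq_mul]

lemma sum_sq_of_injective {n : ℕ} {r : Fin n → Fin n → Prop} (hr : IsTournament r)
    (hinj : Function.Injective (score r)) :
    ∑ i : Fin n, (score r i) ^ 2 = ∑ i ∈ range n, i ^ 2 := by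
  let sf : Fin n → Fin n := fun x => ⟨score r x, score_lt hr x⟩
  have hinj' : Function.Injective sf := by
    intro a b hab
    exact hinj (congrArg Fin.val hab)
  have hbij : Function.Bijective sf := Finite.injective_iff_bijective.mp hinj'
  let e := Equiv.ofBijective sf hbij
  have := Equiv.sum_comp e (fun y : Fin n => (y.val) ^ 2)
  calc ∑ i : Fin n, (score r i) ^ 2 = ∑ i : Fin n, ((e i).val) ^ 2 := rfl
    _ = ∑ y : Fin n, (y.val) ^ 2 := this
    _ = ∑ i ∈ range n, i ^ 2 := Fin.sum_univ_eq_sum_range (fun i => i ^ 2) n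

lemma achievable_step {n m : ℕ} (hn : n = 2 * m + 1) {r : Fin n → Fin n → Prop}
    (hr : IsTournament r)
    (hne : ∑ i : Fin n, (score r i) ^ 2 ≠ ∑ i ∈ range n, i ^ 2) :
    ∃ r' : Fin n → Fin n → Prop, IsTournament r' ∧
      ∑ i : Fin n, (score r' i) ^ 2 = (∑ i : Fin n, (score r i) ^ 2) + 2 := by
  have hninj : ¬ Function.Injective (score r) := fun h => hne (sum_sq_of_injective hr h)
  obtain ⟨v, w, heq, hvw⟩ := Function.not_injective_iff.mp hninj
  by_cases hrvw : r v w
  · exact flip_up hr hvw hrvw heq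
  · have hrwv : r w v := (hr.2 w v (Ne.symm hvw)).mpr hrvw
    exact flip_up hr (Ne.symm hvw) hrwv heq.symm

theorem stmt11 {n : ℕ} (hn : Odd n) :
    Set.ncard {v : ℕ | ∃ r : Fin n → Fin n → Prop,
        IsTournament r ∧ ∑ i : Fin n, (score r i) ^ 2 = v}
      = (n + 1).choose 3 / 4 + 1 := by
  obtain ⟨m, hm0⟩ := hn
  have hm : n = 2 * m + 1 := by omega
  have hmax := max_val_eq hm
  have hach : ∀ t, t ≤ (∑ i ∈ range (m + 1), i ^ 2) →
      ∃ r : Fin n → Fin n → Prop, IsTournament r ∧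
        ∑ i : Fin n, (score r i) ^ 2 = n * m ^ 2 + 2 * t := by
    intro t
    induction t with
    | zero =>
      intro _
      obtain ⟨r, hr, hsum⟩ := rot_exists hm
      exact ⟨r, hr, by omega⟩
    | succ t ih =>
      intro ht
      obtain ⟨r, hr, hsum⟩ := ih (by omega)
      have hne : ∑ i : Fin n, (score r i) ^ 2 ≠ ∑ i ∈ range n, i ^ 2 := by omega
      obtain ⟨r', hr', h2⟩ := achievable_step hm hr hne
      exact ⟨r', hr', by omega⟩
  have hsub : {v : ℕ | ∃ r : Fin n → Fin n → Prop,
        IsTournament r ∧ ∑ i : Fin n, (score r i) ^ 2 = v}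
      = (fun t => n * m ^ 2 + 2 * t) '' (Set.Iic (∑ i ∈ range (m + 1), i ^ 2)) := by
    ext v
    simp only [Set.mem_setOf_eq, Set.mem_image, Set.mem_Iic]
    constructor
    · rintro ⟨r, hr, rfl⟩
      have h1 := sum_sq_lower hm hr
      have h2 := sum_sq_upper hm hr
      have h3 := sum_sq_parity hm hr
      refine ⟨((∑ i : Fin n, (score r i) ^ 2) - n * m ^ 2) / 2, by omega, by omega⟩
    · rintro ⟨t, ht, rfl⟩
      exact hach t ht
  rw [hsub, Set.ncard_image_of_injective _
    (fun a b h => by simpa using h : Function.Injective (fun t => n * m ^ 2 + 2 * t)),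
    ← Finset.coe_Iic, Set.ncard_coe_finset, Nat.card_Iic, choose_div_eq hm]
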